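/- Let C_0 = {(log|z_1|,…,log|z_n|) : |z_1|² + ⋯ + |z_n|² < 1} ⊂ ℝⁿ and let f, g be convex functions on C_0 increasing in each variable with f = g = 0 on ∂C_0, extended by +∞ outside C_0. If for each a ∈ C_0 and each b ∈ ℕⁿ with strictly positive entries one has lim_{t→−∞} f(a+tb)/t ≥ lim_{t→−∞} g(a+tb)/t, then lim_{c→+∞} P_{C_0}(f, g+c) = f almost everywhere on C_0. -/

import Mathlib

open Filter MeasureTheory Metric Set
open scoped ENNReal Topology

noncomputable section

/-- The logarithmic image of the unit ball:
`C₀ = {(log|z₁|,…,log|zₙ|) : Σ|zᵢ|² < 1} = {x : Σ e^{2xᵢ} < 1}`. -/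
def C0 (n : ℕ) : Set (Fin n → ℝ) := {x | ∑ i, Real.exp (2 * x i) < 1}

/-- The convex envelope `P_{C₀}(f, g+c)(x)`: the supremum at `x` of all convex functions on
`C₀` lying below `min(f, g+c)` on `C₀`. -/
def convEnv (n : ℕ) (f g : (Fin n → ℝ) → ℝ) (c : ℝ) (x : Fin n → ℝ) : EReal :=
  ⨆ (u : (Fin n → ℝ) → ℝ) (_ : ConvexOn ℝ (C0 n) u ∧
      ∀ y ∈ C0 n, u y ≤ min (f y) (g y + c)), ((u x : ℝ) : EReal)

/-- The slope at infinity of `h` along the ray `t ↦ a + t b`, `t → -∞`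
(for convex `h` the `limsup` is an honest limit). -/
def raySlope (n : ℕ) (h : (Fin n → ℝ) → ℝ) (a b : Fin n → ℝ) : EReal :=
  Filter.limsup (fun t : ℝ => ((h (a + t • b) / t : ℝ) : EReal)) atBot

namespace Stmt
variable {n : ℕ}

/-- the explicit pairing -/
def dot (p q : Fin n → ℝ) : ℝ := ∑ i, p i * q i

lemma dot_comm (p q : Fin n → ℝ) : dot p q = dot q p := by
  unfold dot; exact Finset.sum_congr rfl fun i _ => mul_comm _ _

lemma C0_neg {x : Fin n → ℝ} (hx : x ∈ C0 n) (i : Fin n) : x i < 0 := by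
  have h1 : Real.exp (2 * x i) ≤ ∑ j, Real.exp (2 * x j) :=
    Finset.single_le_sum (f := fun j => Real.exp (2 * x j)) (fun j _ => (Real.exp_pos _).le) (Finset.mem_univ i)
  have h2 : Real.exp (2 * x i) < 1 := lt_of_le_of_lt h1 hx
  have := Real.exp_lt_one_iff.mp h2
  linarith

lemma C0_down {x y : Fin n → ℝ} (hx : x ∈ C0 n) (h : ∀ i, y i ≤ x i) : y ∈ C0 n := by
  have : (∑ i, Real.exp (2 * y i)) ≤ ∑ i, Real.exp (2 * x i) :=
    Finset.sum_le_sum fun i _ => Real.exp_le_exp.mpr (by linarith [h i])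
  exact lt_of_le_of_lt this hx

lemma isOpen_C0 : IsOpen (C0 n) := by
  have hc : Continuous fun x : Fin n → ℝ => ∑ i, Real.exp (2 * x i) := by
    apply continuous_finset_sum
    intro i _
    exact Real.continuous_exp.comp ((continuous_const).mul (continuous_apply i))
  exact isOpen_lt hc continuous_const

lemma convex_C0 : Convex ℝ (C0 n) := by
  intro x hx y hy a b ha hb hab
  have key : ∀ i, Real.exp (2 * (a • x + b • y) i) ≤
      a * Real.exp (2 * x i) + b * Real.exp (2 * y i) := by
    intro i
    have := (convexOn_exp).2 (Set.mem_univ (2 * x i)) (Set.mem_univ (2 * y i)) ha hb hab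
    have e : 2 * (a • x + b • y) i = a * (2 * x i) + b * (2 * y i) := by
      simp [Pi.add_apply, Pi.smul_apply, smul_eq_mul]; ring
    rw [e]; simpa using this
  calc ∑ i, Real.exp (2 * (a • x + b • y) i)
      ≤ ∑ i, (a * Real.exp (2 * x i) + b * Real.exp (2 * y i)) :=
        Finset.sum_le_sum fun i _ => key i
    _ = a * (∑ i, Real.exp (2 * x i)) + b * (∑ i, Real.exp (2 * y i)) := by
        rw [Finset.sum_add_distrib, Finset.mul_sum, Finset.mul_sum]
    _ < a * 1 + b * 1 := by
        rcases eq_or_lt_of_le ha with h | h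
        · rcases eq_or_lt_of_le hb with h' | h'
          · exfalso; rw [← h, ← h'] at hab; simp at hab
          · rw [← h]; simpa using (mul_lt_mul_of_pos_left hy h')
        · rcases eq_or_lt_of_le hb with h' | h'
          · rw [← h']; simpa using (mul_lt_mul_of_pos_left hx h)
          · have := add_lt_add (mul_lt_mul_of_pos_left hx h) (mul_lt_mul_of_pos_left hy h')
            linarith
    _ = 1 := by linarith


lemma nonpos_of_mono_bd (hn : 0 < n) (h : (Fin n → ℝ) → ℝ)
    (hmono : ∀ x ∈ C0 n, ∀ y ∈ C0 n, (∀ i, x i ≤ y i) → h x ≤ h y)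
    (hbd : ∀ x ∈ frontier (C0 n), Tendsto h (𝓝[C0 n] x) (𝓝 (0 : ℝ)))
    {y : Fin n → ℝ} (hy : y ∈ C0 n) : h y ≤ 0 := by
  classical
  set Ey : ℝ := ∑ i, Real.exp (2 * y i) with hEy
  have hEypos : 0 < Ey := by
    refine Finset.sum_pos (fun i _ => Real.exp_pos _) ?_
    exact ⟨⟨0, hn⟩, Finset.mem_univ _⟩
  have hEylt : Ey < 1 := hy
  set T : ℝ := -(Real.log Ey) / 2 with hT
  have hTpos : 0 < T := by
    have : Real.log Ey < 0 := Real.log_neg hEypos hEylt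
    rw [hT]; linarith
  set w : Fin n → ℝ := fun i => y i + T with hw
  -- the sum at w - s𝟙
  have hsum : ∀ s : ℝ, (∑ i, Real.exp (2 * (w i - s))) = Real.exp (-2*s) := by
    intro s
    have : ∀ i : Fin n, Real.exp (2 * (w i - s)) =
        Real.exp (2 * y i) * (Real.exp (2*T) * Real.exp (-2*s)) := by
      intro i
      rw [← Real.exp_add, ← Real.exp_add]
      congr 1
      simp only [hw]; ring
    rw [Finset.sum_congr rfl fun i _ => this i, ← Finset.sum_mul]
    have hexpT : Real.exp (2*T) = Ey⁻¹ := by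
      rw [hT]
      have : 2 * (-(Real.log Ey)/2) = -(Real.log Ey) := by ring
      rw [this, Real.exp_neg, Real.exp_log hEypos]
    rw [← hEy, hexpT]
    field_simp
  have hmem : ∀ s : ℝ, 0 < s → (fun i => w i - s) ∈ C0 n := by
    intro s hs
    show (∑ i, Real.exp (2 * ((fun i => w i - s) i))) < 1
    simp only []
    rw [hsum s]
    rw [Real.exp_lt_one_iff]
    linarith
  have hwfr : w ∈ frontier (C0 n) := by
    rw [frontier, mem_diff]
    constructor
    · -- closure: limit of w - s𝟙 as s → 0+
      have htd : Tendsto (fun s : ℝ => (fun i => w i - s)) (𝓝[>] (0:ℝ)) (𝓝 w) := by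
        have : Tendsto (fun s : ℝ => (fun i => w i - s)) (𝓝 (0:ℝ)) (𝓝 w) := by
          rw [tendsto_pi_nhds]
          intro i
          simpa using (tendsto_const_nhds.sub (tendsto_id : Tendsto (fun s:ℝ => s) (𝓝 0) (𝓝 0)))
        exact this.mono_left nhdsWithin_le_nhds
      exact mem_closure_of_tendsto htd (eventually_nhdsWithin_of_forall (fun s hs => hmem s hs))
    · intro hmemint
      have : w ∈ C0 n := interior_subset hmemint
      have : (∑ i, Real.exp (2 * w i)) < 1 := this
      have h0 : (∑ i, Real.exp (2 * (w i - 0))) = Real.exp (-2*0) := hsum 0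
      simp only [sub_zero] at h0
      rw [h0] at this
      simp at this
  -- path tendsto within C0
  have hpath : Tendsto (fun s : ℝ => (fun i => w i - s)) (𝓝[>] (0:ℝ)) (𝓝[C0 n] w) := by
    rw [tendsto_nhdsWithin_iff]
    constructor
    · have : Tendsto (fun s : ℝ => (fun i => w i - s)) (𝓝 (0:ℝ)) (𝓝 w) := by
        rw [tendsto_pi_nhds]
        intro i
        simpa using (tendsto_const_nhds.sub (tendsto_id : Tendsto (fun s:ℝ => s) (𝓝 0) (𝓝 0)))
      exact this.mono_left nhdsWithin_le_nhds
    · exact eventually_nhdsWithin_of_forall (fun s hs => hmem s hs)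
  have hcomp : Tendsto (fun s : ℝ => h (fun i => w i - s)) (𝓝[>] (0:ℝ)) (𝓝 0) :=
    (hbd w hwfr).comp hpath
  -- h y ≤ h (w - s𝟙) for s ∈ (0, T]
  have hev : ∀ᶠ s in 𝓝[>] (0:ℝ), h y ≤ h (fun i => w i - s) := by
    filter_upwards [Ioc_mem_nhdsGT hTpos] with s hs
    refine hmono y hy _ (hmem s hs.1) (fun i => ?_)
    simp only [hw]
    linarith [hs.2]
  exact ge_of_tendsto hcomp hev


section slope
variable (h : (Fin n → ℝ) → ℝ) (x b : Fin n → ℝ)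

/-- difference quotient along the ray -/
def Q (t : ℝ) : ℝ := (h (x + t • b) - h x) / t

/-- the asymptotic slope -/
def rsl : ℝ := sInf (Q h x b '' Iio (0:ℝ))

variable {h x b}
variable (hconv : ConvexOn ℝ (C0 n) h)
  (hmono : ∀ x ∈ C0 n, ∀ y ∈ C0 n, (∀ i, x i ≤ y i) → h x ≤ h y)
  (hx : x ∈ C0 n) (hb : ∀ i, 0 ≤ b i)

include hx hb in
lemma ray_mem {t : ℝ} (ht : t ≤ 0) : x + t • b ∈ C0 n := by
  refine C0_down hx fun i => ?_
  have : t * b i ≤ 0 := mul_nonpos_of_nonpos_of_nonneg ht (hb i)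
  simp only [Pi.add_apply, Pi.smul_apply, smul_eq_mul]
  linarith

include hconv hx hb in
lemma Q_mono {t t' : ℝ} (htt : t ≤ t') (ht' : t' < 0) : Q h x b t ≤ Q h x b t' := by
  rcases eq_or_lt_of_le htt with rfl | hlt
  · exact le_refl _
  have ht : t < 0 := lt_trans hlt ht'
  set μ : ℝ := t' / t with hμ
  have hμpos : 0 < μ := div_pos_of_neg_of_neg ht' ht
  have hμlt : μ < 1 := by
    rw [hμ, div_lt_one_of_neg ht]
    exact hlt
  have hcomb : x + t' • b = μ • (x + t • b) + (1 - μ) • x := by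
    funext i
    simp only [Pi.add_apply, Pi.smul_apply, smul_eq_mul]
    have ht0 : t ≠ 0 := ne_of_lt ht
    rw [hμ]
    field_simp
    ring
  have hc := hconv.2 (ray_mem hx hb ht.le) hx hμpos.le (by linarith : (0:ℝ) ≤ 1 - μ)
    (by ring : μ + (1 - μ) = 1)
  rw [← hcomb] at hc
  -- hc : h (x + t' • b) ≤ μ * h (x + t•b) + (1-μ) * h x
  have key : h (x + t' • b) - h x ≤ μ * (h (x + t • b) - h x) := by
    simp only [smul_eq_mul] at hc
    nlinarith
  -- divide by t' < 0
  unfold Q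
  rw [le_div_iff_of_neg ht']
  calc h (x + t' • b) - h x ≤ μ * (h (x + t • b) - h x) := key
    _ = (h (x + t • b) - h x) / t * t' := by rw [hμ]; ring


include hmono hx hb in
lemma Q_nonneg {t : ℝ} (ht : t < 0) : 0 ≤ Q h x b t := by
  have hle : h (x + t • b) ≤ h x := by
    refine hmono _ (ray_mem hx hb ht.le) _ hx fun i => ?_
    have : t * b i ≤ 0 := mul_nonpos_of_nonpos_of_nonneg ht.le (hb i)
    simp only [Pi.add_apply, Pi.smul_apply, smul_eq_mul]
    linarith
  unfold Q
  exact div_nonneg_of_nonpos (by linarith) ht.le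

include hmono hx hb in
lemma rsl_bddBelow : BddBelow (Q h x b '' Iio (0:ℝ)) := by
  refine ⟨0, fun r hr => ?_⟩
  rcases hr with ⟨t, ht, rfl⟩
  exact Q_nonneg hmono hx hb ht

lemma rsl_nonempty : (Q h x b '' Iio (0:ℝ)).Nonempty := ⟨_, ⟨-1, by norm_num, rfl⟩⟩

include hmono hx hb in
lemma rsl_nonneg : 0 ≤ rsl h x b :=
  le_csInf rsl_nonempty (fun r hr => by
    rcases hr with ⟨t, ht, rfl⟩; exact Q_nonneg hmono hx hb ht)

include hmono hx hb in
lemma rsl_le {t : ℝ} (ht : t < 0) : rsl h x b ≤ Q h x b t :=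
  csInf_le (rsl_bddBelow hmono hx hb) ⟨t, ht, rfl⟩

include hconv hmono hx hb in
lemma tendsto_Q : Tendsto (Q h x b) atBot (𝓝 (rsl h x b)) := by
  rw [tendsto_order]
  constructor
  · intro a ha
    refine Eventually.mono (eventually_lt_atBot (0:ℝ)) fun t ht => ?_
    exact lt_of_lt_of_le ha (csInf_le (rsl_bddBelow hmono hx hb) ⟨t, ht, rfl⟩)
  · intro a ha
    obtain ⟨r, ⟨t₀, ht₀, rfl⟩, hr⟩ := exists_lt_of_csInf_lt rsl_nonempty ha
    refine Eventually.mono (eventually_le_atBot t₀) fun t ht => ?_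
    exact lt_of_le_of_lt (Q_mono hconv hx hb ht ht₀) hr

include hconv hmono hx hb in
lemma raySlope_eq : raySlope n h x b = ((rsl h x b : ℝ) : EReal) := by
  have h1 : Tendsto (fun t : ℝ => h (x + t • b) / t) atBot (𝓝 (rsl h x b)) := by
    have h2 : Tendsto (fun t : ℝ => Q h x b t + h x / t) atBot (𝓝 (rsl h x b + 0)) := by
      refine Tendsto.add (tendsto_Q hconv hmono hx hb) ?_
      have : Tendsto (fun t : ℝ => t⁻¹) atBot (𝓝 0) := by
        have := (tendsto_inv_atTop_zero (𝕜 := ℝ)).comp tendsto_neg_atBot_atTop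
        have h4 : Tendsto (fun t : ℝ => -(-t)⁻¹) atBot (𝓝 (-0)) := this.neg
        simp only [neg_zero] at h4
        refine h4.congr fun t => ?_
        rw [inv_neg, neg_neg]
      have h5 := (tendsto_const_nhds (x := h x)).mul this
      rw [mul_zero] at h5
      exact h5.congr fun t => (div_eq_mul_inv _ _).symm
    rw [add_zero] at h2
    refine h2.congr' ?_
    filter_upwards [eventually_lt_atBot (0:ℝ)] with t ht
    unfold Q
    field_simp
    ring
  have h3 : Tendsto (fun t : ℝ => ((h (x + t • b) / t : ℝ) : EReal)) atBot
      (𝓝 ((rsl h x b : ℝ) : EReal)) := by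
    rw [EReal.tendsto_coe]
    exact h1
  exact h3.limsup_eq

end slope

lemma dot_sub (p y x : Fin n → ℝ) : dot p (y - x) = dot p y - dot p x := by
  unfold dot
  rw [← Finset.sum_sub_distrib]
  exact Finset.sum_congr rfl fun i _ => by simp [Pi.sub_apply]; ring

lemma exists_subgradient (h : (Fin n → ℝ) → ℝ) (hconv : ConvexOn ℝ (C0 n) h)
    (hmono : ∀ x ∈ C0 n, ∀ y ∈ C0 n, (∀ i, x i ≤ y i) → h x ≤ h y)
    {x : Fin n → ℝ} (hx : x ∈ C0 n) :
    ∃ p : Fin n → ℝ, (∀ i, 0 ≤ p i) ∧ ∀ y ∈ C0 n, h x + (dot p y - dot p x) ≤ h y := by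
  classical
  set A : Set ((Fin n → ℝ) × ℝ) := {z | z.1 ∈ C0 n ∧ h z.1 < z.2} with hA
  have hAconv : Convex ℝ A := by
    rintro ⟨y, r⟩ ⟨hy, hyr⟩ ⟨z, s⟩ ⟨hz, hzs⟩ a b ha hb hab
    refine ⟨convex_C0 hy hz ha hb hab, ?_⟩
    have hc := hconv.2 hy hz ha hb hab
    have h1 : a * h y + b * h z < a * r + b * s := by
      rcases eq_or_lt_of_le ha with rfl | ha'
      · simp only [zero_mul, zero_add]
        have hb1 : b = 1 := by linarith
        rw [hb1]; simpa using hzs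
      · have : a * h y < a * r := mul_lt_mul_of_pos_left hyr ha'
        have h2 : b * h z ≤ b * s := mul_le_mul_of_nonneg_left hzs.le hb
        linarith
    calc h (a • y + b • z) ≤ a * h y + b * h z := by simpa using hc
      _ < a * r + b * s := h1
  have hAopen : IsOpen A := by
    rw [isOpen_iff_mem_nhds]
    rintro ⟨y, r⟩ ⟨hy, hyr⟩
    have hcont : ContinuousAt h y :=
      (hconv.continuousOn isOpen_C0).continuousAt (isOpen_C0.mem_nhds hy)
    have hev : ∀ᶠ z in 𝓝 y, h z < (h y + r)/2 := by
      have : (h y + r)/2 ∈ Ioi (h y) := by simp; linarith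
      exact hcont.eventually_lt tendsto_const_nhds (by linarith : h y < (h y + r)/2)
    have hev2 : ∀ᶠ z in 𝓝 y, z ∈ C0 n := isOpen_C0.eventually_mem hy
    rw [nhds_prod_eq, Filter.mem_prod_iff]
    refine ⟨{z | h z < (h y + r)/2 ∧ z ∈ C0 n}, by filter_upwards [hev, hev2] with z h1 h2; exact ⟨h1, h2⟩,
      Ioi ((h y + r)/2), Ioi_mem_nhds (by linarith), ?_⟩
    rintro ⟨z, s⟩ ⟨⟨hz1, hz2⟩, hs⟩
    exact ⟨hz2, lt_trans hz1 hs⟩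
  have hxA : (x, h x) ∉ A := fun ⟨_, hlt⟩ => lt_irrefl _ hlt
  obtain ⟨φ, hφ⟩ := geometric_hahn_banach_open_point hAconv hAopen hxA
  set β : ℝ := φ (0, 1) with hβ
  set ψ : (Fin n → ℝ) →L[ℝ] ℝ := φ.comp (ContinuousLinearMap.inl ℝ (Fin n → ℝ) ℝ) with hψ
  have hsplit : ∀ y r, φ (y, r) = ψ y + r * β := by
    intro y r
    have : (y, r) = ((y, 0) : (Fin n → ℝ) × ℝ) + (r • ((0,1) : (Fin n → ℝ) × ℝ)) := by
      simp [Prod.ext_iff]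
    rw [this, map_add, φ.map_smul]
    simp [hψ, hβ, ContinuousLinearMap.comp_apply, smul_eq_mul, mul_comm]
  have hβneg : β < 0 := by
    have h1 := hφ (x, h x + 1) ⟨hx, show h x < h x + 1 by linarith⟩
    rw [hsplit, hsplit] at h1
    linarith
  -- key inequality: ∀ y ∈ C0, ψ y + h y * β ≤ ψ x + h x * β
  have hkey : ∀ y ∈ C0 n, ψ y + h y * β ≤ ψ x + h x * β := by
    intro y hy
    have h2 : ∀ s : ℝ, 0 < s → ψ y + (h y + s) * β < ψ x + h x * β := by
      intro s hs
      have := hφ (y, h y + s) ⟨hy, show h y < h y + s by linarith⟩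
      rw [hsplit, hsplit] at this
      exact this
    by_contra hcon
    push_neg at hcon
    have hs : 0 < (ψ y + h y * β - (ψ x + h x * β)) / (-β) := by
      apply div_pos (by linarith) (by linarith)
    have hthis := h2 _ hs
    rw [add_mul] at hthis
    have hne : β ≠ 0 := ne_of_lt hβneg
    have he : (ψ y + h y * β - (ψ x + h x * β)) / -β * β
        = -(ψ y + h y * β - (ψ x + h x * β)) := by
      rw [div_neg, neg_mul, div_mul_cancel₀ _ hne]
    rw [he] at hthis
    linarith
  classical
  set e : Fin n → (Fin n → ℝ) := fun i => fun j => if i = j then (1:ℝ) else 0 with he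
  set p : Fin n → ℝ := fun i => ψ (e i) / (-β) with hp
  have hne : β ≠ 0 := ne_of_lt hβneg
  have hψdot : ∀ y : Fin n → ℝ, ψ y = (-β) * dot p y := by
    intro y
    calc ψ y = ψ (∑ i, (y i) • e i) := by rw [← pi_eq_sum_univ y]
      _ = ∑ i, (y i) * ψ (e i) := by
          rw [map_sum]
          refine Finset.sum_congr rfl fun i _ => ?_
          rw [ψ.map_smul, smul_eq_mul]
      _ = (-β) * dot p y := by
          unfold dot
          rw [Finset.mul_sum]
          refine Finset.sum_congr rfl fun i _ => ?_
          rw [hp]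
          field_simp
  refine ⟨p, ?_, ?_⟩
  · intro i
    -- monotonicity: apply key at y := x - single i 1
    have hyC : (x - e i) ∈ C0 n := by
      refine C0_down hx fun j => ?_
      by_cases hij : i = j
      · subst hij; simp [he]
      · simp [he, hij]
    have h1 := hkey _ hyC
    have h2 : h (x - e i) ≤ h x := by
      refine hmono _ hyC _ hx fun j => ?_
      by_cases hij : i = j
      · subst hij; simp [he]
      · simp [he, hij]
    rw [hψdot, hψdot] at h1
    have hdot : dot p (x - e i) = dot p x - p i := by
      rw [dot_sub]
      congr 1
      unfold dot
      rw [Finset.sum_eq_single i]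
      · simp [he]
      · intro j _ hji
        simp [he, Ne.symm hji]
      · intro hcon; exact absurd (Finset.mem_univ i) hcon
    rw [hdot] at h1
    nlinarith [h1, h2, hβneg]
  · intro y hy
    have h1 := hkey y hy
    rw [hψdot, hψdot] at h1
    nlinarith [h1, hβneg]


def basis (i : Fin n) : Fin n → ℝ := fun j => if i = j then 1 else 0

lemma dot_add' (p q y : Fin n → ℝ) : dot (p + q) y = dot p y + dot q y := by
  unfold dot
  rw [← Finset.sum_add_distrib]
  exact Finset.sum_congr rfl fun i _ => by simp [Pi.add_apply]; ring

lemma dot_smul' (c : ℝ) (p y : Fin n → ℝ) : dot (c • p) y = c * dot p y := by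
  unfold dot
  rw [Finset.mul_sum]
  exact Finset.sum_congr rfl fun i _ => by simp [Pi.smul_apply, smul_eq_mul]; ring

lemma dot_basis (i : Fin n) (y : Fin n → ℝ) : dot (basis i) y = y i := by
  unfold dot basis
  rw [Finset.sum_eq_single i]
  · simp
  · intro j _ hji; simp [Ne.symm hji]
  · intro hcon; exact absurd (Finset.mem_univ i) hcon
/-- The set of slopes of global affine minorants of `g` on `C0`. -/
def Sg (g : (Fin n → ℝ) → ℝ) : Set (Fin n → ℝ) :=
  {q | ∃ c : ℝ, ∀ y ∈ C0 n, dot q y - c ≤ g y}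

lemma Sg_convex (g : (Fin n → ℝ) → ℝ) : Convex ℝ (Sg g) := by
  rintro q ⟨c, hc⟩ q' ⟨c', hc'⟩ a b ha hb hab
  refine ⟨a * c + b * c', fun y hy => ?_⟩
  have e : dot (a • q + b • q') y = a * dot q y + b * dot q' y := by
    rw [dot_add', dot_smul', dot_smul']
  rw [e]
  have h1 := mul_le_mul_of_nonneg_left (hc y hy) ha
  have h2 := mul_le_mul_of_nonneg_left (hc' y hy) hb
  have h3 : a * g y + b * g y = g y := by rw [← add_mul, hab, one_mul]
  nlinarith [h1, h2, h3]

theorem exists_qbar (f g : (Fin n → ℝ) → ℝ)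
    (hfconv : ConvexOn ℝ (C0 n) f) (hgconv : ConvexOn ℝ (C0 n) g)
    (hfmono : ∀ x ∈ C0 n, ∀ y ∈ C0 n, (∀ i, x i ≤ y i) → f x ≤ f y)
    (hgmono : ∀ x ∈ C0 n, ∀ y ∈ C0 n, (∀ i, x i ≤ y i) → g x ≤ g y)
    (hslope : ∀ a ∈ C0 n, ∀ b : Fin n → ℕ, (∀ i, 0 < b i) →
      raySlope n g a (fun i => (b i : ℝ)) ≤ raySlope n f a (fun i => (b i : ℝ)))
    {x : Fin n → ℝ} (hx : x ∈ C0 n) {p : Fin n → ℝ} (hp : ∀ i, 0 ≤ p i)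
    (hsub : ∀ y ∈ C0 n, f x + (dot p y - dot p x) ≤ f y)
    {ε : ℝ} (hε : 0 < ε) :
    ∃ q : Fin n → ℝ, ∃ C : ℝ, (∀ i, q i ≤ p i + ε) ∧ ∀ y ∈ C0 n, dot q y - C ≤ g y := by
  classical
  -- it suffices that the point `p + ε/2` is in the closure of `Sg g`
  suffices hcl : (fun i => p i + ε/2) ∈ closure (Sg g) by
    obtain ⟨q, hq, hdq⟩ := Metric.mem_closure_iff.mp hcl (ε/2) (by linarith)
    refine ⟨q, ?_⟩
    obtain ⟨c, hc⟩ := hq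
    refine ⟨c, fun i => ?_, hc⟩
    have h1 : ‖((fun i => p i + ε/2) - q) i‖ ≤ ‖(fun i => p i + ε/2) - q‖ :=
      norm_le_pi_norm _ i
    have h2 : |p i + ε/2 - q i| < ε/2 := by
      have e0 : ((fun i => p i + ε/2) - q) i = p i + ε/2 - q i := rfl
      rw [e0] at h1
      rw [dist_eq_norm] at hdq
      exact lt_of_le_of_lt h1 hdq
    have := abs_lt.mp h2
    linarith [this.1, this.2]
  by_contra hcl
  obtain ⟨φ, u, hSu, hu⟩ := geometric_hahn_banach_closed_point
    ((Sg_convex g).closure) isClosed_closure hcl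
  -- turn φ into a vector b with φ q = - dot b q
  set b : Fin n → ℝ := fun i => -φ (basis i) with hb
  have hφdot : ∀ q : Fin n → ℝ, φ q = -dot b q := by
    intro q
    have hrep : q = ∑ i, (q i) • basis i := by
      have := pi_eq_sum_univ q
      convert this using 2
      rfl
    calc φ q = φ (∑ i, (q i) • basis i) := by rw [← hrep]
      _ = ∑ i, (q i) * φ (basis i) := by
          rw [map_sum]
          exact Finset.sum_congr rfl fun i _ => by rw [φ.map_smul, smul_eq_mul]
      _ = -dot b q := by
          unfold dot
          rw [← Finset.sum_neg_distrib]
          exact Finset.sum_congr rfl fun i _ => by rw [hb]; ring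
  -- membership of subgradients of g in Sg
  have hsubg_mem : ∀ z ∈ C0 n, ∀ q : Fin n → ℝ,
      (∀ y ∈ C0 n, g z + (dot q y - dot q z) ≤ g y) → q ∈ Sg g := by
    intro z hz q hq
    exact ⟨dot q z - g z, fun y hy => by linarith [hq y hy]⟩
  -- Sg is nonempty
  obtain ⟨q0, hq0nn, hq0⟩ := exists_subgradient g hgconv hgmono hx
  have hq0S : q0 ∈ Sg g := hsubg_mem x hx q0 hq0
  -- all elements of Sg satisfy dot b q > -u
  have hSlb : ∀ q ∈ Sg g, -u < dot b q := by
    intro q hq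
    have := hSu q (subset_closure hq)
    rw [hφdot] at this
    linarith
  -- the point: dot b (p + ε/2) < -u
  have hpt : dot b p + (ε/2) * (∑ i, b i) < -u := by
    have := hu
    rw [hφdot] at this
    have e1 : dot b (fun i => p i + ε/2) = dot b p + (ε/2) * ∑ i, b i := by
      unfold dot
      rw [Finset.mul_sum, ← Finset.sum_add_distrib]
      exact Finset.sum_congr rfl fun i _ => by ring
    rw [e1] at this
    linarith
  -- b is nonnegative
  have hbnn : ∀ i, 0 ≤ b i := by
    intro i
    by_contra hneg
    push_neg at hneg
    -- q0 + T • e i ∈ Sg for T ≥ 0, and dot b (q0 + T e i) = dot b q0 + T * b i → -∞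
    set T : ℝ := (dot b q0 + u + 1) / (-b i) with hT
    have hTpos : 0 < T := by
      apply div_pos ?_ (by linarith)
      have := hSlb q0 hq0S
      linarith
    have hmemS : (q0 + T • basis i) ∈ Sg g := by
      obtain ⟨c, hc⟩ := hq0S
      refine ⟨c, fun y hy => ?_⟩
      have e2 : dot (q0 + T • basis i) y = dot q0 y + T * y i := by
        rw [dot_add', dot_smul', dot_basis]
      rw [e2]
      have : T * y i ≤ 0 := mul_nonpos_of_nonneg_of_nonpos hTpos.le (C0_neg hy i).le
      linarith [hc y hy]
    have h3 := hSlb _ hmemS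
    have e3 : dot b (q0 + T • basis i) = dot b q0 + T * b i := by
      rw [dot_comm, dot_add', dot_smul', dot_basis, dot_comm]
    rw [e3] at h3
    have e4 : T * b i = -(dot b q0 + u + 1) := by
      rw [hT, div_neg, neg_mul, div_mul_cancel₀ _ (ne_of_lt hneg)]
    rw [e4] at h3
    linarith
  -- sum of b is positive
  have hbsum : 0 < ∑ i, b i := by
    rcases eq_or_lt_of_le (Finset.sum_nonneg fun i _ => hbnn i) with hz | hz
    · exfalso
      have hall : ∀ i, b i = 0 := by
        intro i
        have := (Finset.sum_eq_zero_iff_of_nonneg (fun j _ => hbnn j)).mp hz.symm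
        exact this i (Finset.mem_univ i)
      have hzero : ∀ q : Fin n → ℝ, dot b q = 0 := by
        intro q; unfold dot
        exact Finset.sum_eq_zero fun i _ => by rw [hall i]; ring
      have h1 := hSlb q0 hq0S
      rw [hzero] at h1
      rw [hzero, ← hz] at hpt
      linarith
    · exact hz
  -- choose N
  set Sp : ℝ := ∑ i, p i with hSp
  obtain ⟨N, hN⟩ := exists_nat_gt ((2 * Sp + 1) / ((ε/2) * (∑ i, b i)))
  have hNpos : 0 < (N:ℝ) := by
    apply lt_of_le_of_lt ?_ hN
    apply div_nonneg
    · have : 0 ≤ Sp := Finset.sum_nonneg fun i _ => hp i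
      linarith
    · exact (mul_pos (by linarith : (0:ℝ) < ε/2) hbsum).le
  -- the natural direction
  set bt : Fin n → ℕ := fun i => ⌈(N:ℝ) * b i⌉₊ + 1 with hbt
  have hbtpos : ∀ i, 0 < bt i := fun i => Nat.succ_pos _
  set bR : Fin n → ℝ := fun i => ((bt i : ℕ) : ℝ) with hbR
  have hbRnn : ∀ i, 0 ≤ bR i := fun i => Nat.cast_nonneg _
  have hlow : ∀ i, (N:ℝ) * b i ≤ bR i := by
    intro i
    rw [hbR, hbt]
    push_cast
    have := Nat.le_ceil ((N:ℝ) * b i)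
    linarith
  have hhigh : ∀ i, bR i ≤ (N:ℝ) * b i + 2 := by
    intro i
    rw [hbR, hbt]
    push_cast
    have h1 : (⌈(N:ℝ) * b i⌉₊ : ℝ) < (N:ℝ) * b i + 1 :=
      Nat.ceil_lt_add_one (mul_nonneg hNpos.le (hbnn i))
    linarith
  -- slopes
  have hsl := hslope x hx bt hbtpos
  rw [raySlope_eq hgconv hgmono hx hbRnn, raySlope_eq hfconv hfmono hx hbRnn] at hsl
  have hsl' : rsl g x bR ≤ rsl f x bR := by exact_mod_cast hsl
  -- rsl f ≤ dot p bR
  have hfle : rsl f x bR ≤ dot p bR := by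
    have h1 : rsl f x bR ≤ Q f x bR (-1) := rsl_le hfmono hx hbRnn (by norm_num)
    have h2 : Q f x bR (-1) ≤ dot p bR := by
      unfold Q
      have h3 := hsub _ (ray_mem hx hbRnn (by norm_num : (-1:ℝ) ≤ 0))
      have e5 : dot p (x + (-1 : ℝ) • bR) = dot p x - dot p bR := by
        unfold dot
        rw [← Finset.sum_sub_distrib]
        refine Finset.sum_congr rfl fun i _ => ?_
        simp [Pi.add_apply, Pi.smul_apply]; ring
      rw [e5] at h3
      rw [div_le_iff_of_neg (by norm_num : (-1:ℝ) < 0)]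
      linarith
    linarith
  -- find t with Q g x bR t < rsl g x bR + 1
  have : rsl g x bR < rsl g x bR + 1 := by linarith
  obtain ⟨r, ⟨t, ht, rfl⟩, hr⟩ := exists_lt_of_csInf_lt rsl_nonempty this
  -- subgradient of g at z := x + t • bR
  have hzC : x + t • bR ∈ C0 n := ray_mem hx hbRnn ht.le
  obtain ⟨qz, hqznn, hqz⟩ := exists_subgradient g hgconv hgmono hzC
  have hqzS : qz ∈ Sg g := hsubg_mem _ hzC qz hqz
  -- dot qz bR ≤ Q g x bR t
  have hqzQ : dot qz bR ≤ Q g x bR t := by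
    have h4 := hqz x hx
    have e6 : dot qz x - dot qz (x + t • bR) = (-t) * dot qz bR := by
      unfold dot
      rw [← Finset.sum_sub_distrib, Finset.mul_sum]
      refine Finset.sum_congr rfl fun i _ => ?_
      simp only [Pi.add_apply, Pi.smul_apply, smul_eq_mul]; ring
    rw [e6] at h4
    unfold Q
    rw [le_div_iff_of_neg ht]
    nlinarith
  -- dot b qz ≤ dot qz bR / N
  have hchain1 : dot b qz ≤ dot qz bR / (N:ℝ) := by
    rw [le_div_iff₀ hNpos]
    have : ∀ i, (N:ℝ) * (b i * qz i) ≤ qz i * bR i := by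
      intro i
      have := mul_le_mul_of_nonneg_right (hlow i) (hqznn i)
      nlinarith [this]
    calc dot b qz * (N:ℝ) = ∑ i, (N:ℝ) * (b i * qz i) := by
          unfold dot; rw [Finset.sum_mul]; exact Finset.sum_congr rfl fun i _ => by ring
      _ ≤ ∑ i, qz i * bR i := Finset.sum_le_sum fun i _ => this i
      _ = dot qz bR := rfl
  -- dot p bR ≤ N * dot p b + 2 * Sp
  have hchain2 : dot p bR ≤ (N:ℝ) * dot b p + 2 * Sp := by
    have : ∀ i, p i * bR i ≤ (N:ℝ) * (b i * p i) + 2 * p i := by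
      intro i
      have := mul_le_mul_of_nonneg_left (hhigh i) (hp i)
      nlinarith [this]
    calc dot p bR = ∑ i, p i * bR i := rfl
      _ ≤ ∑ i, ((N:ℝ) * (b i * p i) + 2 * p i) := Finset.sum_le_sum fun i _ => this i
      _ = (N:ℝ) * dot b p + 2 * Sp := by
          rw [Finset.sum_add_distrib, ← Finset.mul_sum, ← Finset.mul_sum]
          unfold dot
          rw [hSp]
  -- final contradiction
  have hfinal1 : -u < dot b qz := hSlb qz hqzS
  have hfinal2 : dot b qz < (rsl g x bR + 1) / (N:ℝ) := by
    have h5 : dot qz bR < rsl g x bR + 1 := lt_of_le_of_lt hqzQ hr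
    have h6 : dot qz bR / (N:ℝ) < (rsl g x bR + 1) / (N:ℝ) := by gcongr
    exact lt_of_le_of_lt hchain1 h6
  have hfinal3 : (rsl g x bR + 1) / (N:ℝ) ≤ (dot p bR + 1) / (N:ℝ) := by gcongr; linarith
  have hfinal4 : (dot p bR + 1) / (N:ℝ) ≤ dot b p + (2 * Sp + 1)/(N:ℝ) := by
    have h7 : dot p bR + 1 ≤ (N:ℝ) * dot b p + (2 * Sp + 1) := by linarith [hchain2]
    calc (dot p bR + 1) / (N:ℝ) ≤ ((N:ℝ) * dot b p + (2 * Sp + 1)) / (N:ℝ) := by gcongr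
      _ = dot b p + (2 * Sp + 1)/(N:ℝ) := by
          field_simp
  have hfinal5 : (2 * Sp + 1)/(N:ℝ) < (ε/2) * (∑ i, b i) := by
    rw [div_lt_iff₀ hNpos]
    rw [div_lt_iff₀ (by positivity : 0 < (ε/2) * (∑ i, b i))] at hN
    linarith [hN]
  linarith [hfinal1, hfinal2, hfinal3, hfinal4, hfinal5, hpt]


lemma convexOn_affine (P : Fin n → ℝ) (K : ℝ) :
    ConvexOn ℝ (C0 n) (fun y => dot P y + K) := by
  refine ⟨convex_C0, fun y hy z hz a b ha hb hab => ?_⟩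
  have e1 : dot P (a • y + b • z) = a * dot P y + b * dot P z := by
    rw [dot_comm, dot_add', dot_smul' a y P, dot_smul' b z P, dot_comm y P, dot_comm z P]
  simp only [smul_eq_mul]
  rw [e1]
  have e2 : a*K + b*K = K := by rw [← add_mul, hab, one_mul]
  linarith

/-- pointwise convergence at interior points -/
lemma pointwise_tendsto (f g : (Fin n → ℝ) → ℝ)
    (hfconv : ConvexOn ℝ (C0 n) f) (hgconv : ConvexOn ℝ (C0 n) g)
    (hfmono : ∀ x ∈ C0 n, ∀ y ∈ C0 n, (∀ i, x i ≤ y i) → f x ≤ f y)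
    (hgmono : ∀ x ∈ C0 n, ∀ y ∈ C0 n, (∀ i, x i ≤ y i) → g x ≤ g y)
    (hfbd : ∀ x ∈ frontier (C0 n), Tendsto f (𝓝[C0 n] x) (𝓝 (0 : ℝ)))
    (hslope : ∀ a ∈ C0 n, ∀ b : Fin n → ℕ, (∀ i, 0 < b i) →
      raySlope n g a (fun i => (b i : ℝ)) ≤ raySlope n f a (fun i => (b i : ℝ)))
    {x : Fin n → ℝ} (hx : x ∈ C0 n) :
    Tendsto (fun c : ℝ => convEnv n f g c x) atTop (𝓝 ((f x : ℝ) : EReal)) := by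
  classical
  -- upper bound
  have hub : ∀ c : ℝ, convEnv n f g c x ≤ ((f x : ℝ) : EReal) := by
    intro c
    refine iSup_le fun u => iSup_le fun hu => ?_
    exact EReal.coe_le_coe_iff.mpr ((hu.2 x hx).trans (min_le_left _ _))
  -- lower bound
  have hlb : ∀ δ : ℝ, 0 < δ → ∃ c₀ : ℝ, ∀ c, c₀ ≤ c →
      ((f x - δ : ℝ) : EReal) ≤ convEnv n f g c x := by
    intro δ hδ
    rcases Nat.eq_zero_or_pos n with hn | hn
    · -- n = 0 : the single point
      subst hn
      refine ⟨f x - g x, fun c hc => ?_⟩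
      set u : (Fin 0 → ℝ) → ℝ := fun _ => min (f x) (g x + c) with hu
      have hadm : ConvexOn ℝ (C0 0) u ∧ ∀ y ∈ C0 0, u y ≤ min (f y) (g y + c) := by
        constructor
        · exact convexOn_const _ convex_C0
        · intro y _
          have : y = x := funext fun i => i.elim0
          rw [this]
      have h1 : ((u x : ℝ) : EReal) ≤ convEnv 0 f g c x := by
        exact le_iSup_of_le u (le_iSup_of_le hadm le_rfl)
      refine le_trans ?_ h1
      rw [EReal.coe_le_coe_iff]
      rw [hu]
      simp only []
      have : f x ≤ g x + c := by linarith
      rw [min_eq_left this]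
      linarith
    · -- main case
      obtain ⟨p, hpnn, hpsub⟩ := exists_subgradient f hfconv hfmono hx
      have hf0 : ∀ y ∈ C0 n, f y ≤ 0 := fun y hy => nonpos_of_mono_bd hn f hfmono hfbd hy
      have hfx0 : f x ≤ 0 := hf0 x hx
      have hsx0 : (∑ i, x i) ≤ 0 :=
        Finset.sum_nonpos fun i _ => (C0_neg hx i).le
      set θ : ℝ := δ / (2 * (1 - f x)) with hθ
      have hθpos : 0 < θ := by
        apply div_pos hδ
        nlinarith
      set ε : ℝ := δ / (2 * (1 - ∑ i, x i)) with hε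
      have hεpos : 0 < ε := by
        apply div_pos hδ
        nlinarith
      obtain ⟨q, C, hqle, hqaff⟩ := exists_qbar f g hfconv hgconv hfmono hgmono hslope hx
        hpnn hpsub hεpos
      set one : Fin n → ℝ := fun _ => (1:ℝ) with hone
      set P : Fin n → ℝ := fun i => (1+θ) * p i + ε with hP
      set K : ℝ := (1+θ) * (f x - dot p x) with hK
      set u : (Fin n → ℝ) → ℝ := fun y => dot P y + K with hu
      have hueq : ∀ y, u y = (1+θ) * (f x + (dot p y - dot p x)) + ε * ∑ i, y i := by
        intro y
        rw [hu]
        simp only []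
        rw [hP, hK]
        unfold dot
        rw [Finset.sum_congr rfl (fun i _ => by
          show ((1+θ) * p i + ε) * y i = (1+θ)*(p i * y i) + ε * y i
          ring)]
        rw [Finset.sum_add_distrib, ← Finset.mul_sum, ← Finset.mul_sum]
        ring
      -- coefficient domination : q i ≤ P i
      have hqP : ∀ i, q i ≤ P i := by
        intro i
        have h1 := hqle i
        rw [hP]
        have : 0 ≤ θ * p i := mul_nonneg hθpos.le (hpnn i)
        simp only []
        linarith
      refine ⟨K + C, fun c hc => ?_⟩
      have hadm : ConvexOn ℝ (C0 n) u ∧ ∀ y ∈ C0 n, u y ≤ min (f y) (g y + c) := by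
        constructor
        · exact convexOn_affine P K
        · intro y hy
          have hsy0 : (∑ i, y i) ≤ 0 := Finset.sum_nonpos fun i _ => (C0_neg hy i).le
          rw [le_min_iff]
          constructor
          · -- u ≤ f
            rw [hueq]
            have hs := hpsub y hy
            have hfy0 := hf0 y hy
            have h2 : θ * (f x + (dot p y - dot p x)) ≤ 0 := by
              apply mul_nonpos_of_nonneg_of_nonpos hθpos.le
              linarith
            have h3 : ε * ∑ i, y i ≤ 0 :=
              mul_nonpos_of_nonneg_of_nonpos hεpos.le hsy0
            nlinarith [hs, h2, h3]
          · -- u ≤ g + c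
            have h4 : dot P y - dot q y ≤ 0 := by
              have : ∀ i, P i * y i - q i * y i ≤ 0 := by
                intro i
                have h5 : q i ≤ P i := hqP i
                have h6 : y i ≤ 0 := (C0_neg hy i).le
                nlinarith
              unfold dot
              rw [← Finset.sum_sub_distrib]
              exact Finset.sum_nonpos fun i _ => this i
            have h7 := hqaff y hy
            rw [hu]
            simp only []
            linarith
      have h1 : ((u x : ℝ) : EReal) ≤ convEnv n f g c x :=
        le_iSup_of_le u (le_iSup_of_le hadm le_rfl)
      refine le_trans ?_ h1
      rw [EReal.coe_le_coe_iff, hueq]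
      have e2 : dot p x - dot p x = 0 := by ring
      rw [e2, add_zero]
      -- (1+θ) f x + ε Σ x ≥ f x - δ
      have h8 : θ * (- f x) ≤ δ/2 := by
        have h9 : θ * (1 - f x) = δ/2 := by
          have hd : (2 * (1 - f x)) ≠ 0 := by nlinarith
          rw [hθ, div_mul_eq_mul_div, div_eq_iff hd]
          ring
        nlinarith [hθpos]
      have h10 : ε * (- ∑ i, x i) ≤ δ/2 := by
        have h11 : ε * (1 - ∑ i, x i) = δ/2 := by
          have hd : (2 * (1 - ∑ i, x i)) ≠ 0 := by nlinarith
          rw [hε, div_mul_eq_mul_div, div_eq_iff hd]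
          ring
        nlinarith [hεpos]
      nlinarith [h8, h10]
  -- conclude
  rw [tendsto_order]
  constructor
  · intro a ha
    induction a with
    | bot =>
      obtain ⟨c₀, hc₀⟩ := hlb 1 one_pos
      filter_upwards [eventually_ge_atTop c₀] with c hc
      exact lt_of_lt_of_le (EReal.bot_lt_coe _) (hc₀ c hc)
    | coe r =>
      have hr : r < f x := EReal.coe_lt_coe_iff.mp ha
      obtain ⟨c₀, hc₀⟩ := hlb ((f x - r)/2) (by linarith)
      filter_upwards [eventually_ge_atTop c₀] with c hc
      refine lt_of_lt_of_le ?_ (hc₀ c hc)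
      rw [EReal.coe_lt_coe_iff]
      linarith
    | top => exact absurd ha (not_top_lt)
  · intro a ha
    exact Eventually.of_forall fun c => lt_of_le_of_lt (hub c) ha


end Stmt

/-- Let `f, g` be convex functions on `C₀` increasing in each variable with
boundary values `0`.  If `lim_{t→-∞} f(a+tb)/t ≥ lim_{t→-∞} g(a+tb)/t` for all `a ∈ C₀` and
all `b ∈ ℕⁿ` with positive entries, then `lim_{c→∞} P_{C₀}(f,g+c) = f` a.e. on `C₀`. -/
theorem convEnv_tendsto_of_raySlope (n : ℕ) (f g : (Fin n → ℝ) → ℝ)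
    (hfconv : ConvexOn ℝ (C0 n) f) (hgconv : ConvexOn ℝ (C0 n) g)
    (hfmono : ∀ x ∈ C0 n, ∀ y ∈ C0 n, (∀ i, x i ≤ y i) → f x ≤ f y)
    (hgmono : ∀ x ∈ C0 n, ∀ y ∈ C0 n, (∀ i, x i ≤ y i) → g x ≤ g y)
    (hfbd : ∀ x ∈ frontier (C0 n), Tendsto f (𝓝[C0 n] x) (𝓝 (0 : ℝ)))
    (hgbd : ∀ x ∈ frontier (C0 n), Tendsto g (𝓝[C0 n] x) (𝓝 (0 : ℝ)))
    (hslope : ∀ a ∈ C0 n, ∀ b : Fin n → ℕ, (∀ i, 0 < b i) →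
      raySlope n g a (fun i => (b i : ℝ)) ≤ raySlope n f a (fun i => (b i : ℝ))) :
    ∀ᵐ x ∂(volume.restrict (C0 n)),
      Tendsto (fun c : ℝ => convEnv n f g c x) atTop (𝓝 ((f x : ℝ) : EReal)) := by
  have hmeas : MeasurableSet (C0 n) := Stmt.isOpen_C0.measurableSet
  filter_upwards [ae_restrict_mem hmeas] with x hx
  exact Stmt.pointwise_tendsto f g hfconv hgconv hfmono hgmono hfbd hslope hx

end
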